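/- Let U be a finite set with |U| ≤ n, let 0 < ν < 1, and let S_1, …, S_t be subsets of U with |S_i| ≥ νn for each i ∈ [t]. Then there exists a subset H ⊆ [t] with |H| ≤ 2/ν such that for every i ∈ [t], the intersection of S_i with the union ⋃_{j∈H} S_j has size at least νn/2; in particular, for every i ∈ [t] there exists j ∈ H such that |S_i ∩ S_j| ≥ ν²n/4. -/
import Mathlib


/-- **Basic covering lemma.** Given subsets `S₁, …, S_t` of a finite set `U` with `|U| ≤ n`
and `|S_i| ≥ νn`, there is a subfamily `H ⊆ [t]` of size at most `2/ν` such that every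
`S_i` intersects `⋃_{j ∈ H} S_j` in at least `νn/2` elements; in particular every `S_i`
has intersection of size at least `ν²n/4` with some `S_j`, `j ∈ H`. -/
theorem basic_covering_lemma {α : Type*} [DecidableEq α]
    (U : Finset α) (n : ℕ) (hU : U.card ≤ n)
    (ν : ℝ) (hν0 : 0 < ν) (hν1 : ν < 1)
    (t : ℕ) (S : Fin t → Finset α)
    (hsub : ∀ i, S i ⊆ U) (hsize : ∀ i, ν * n ≤ ((S i).card : ℝ)) :
    ∃ H : Finset (Fin t), (H.card : ℝ) ≤ 2 / ν ∧
      ∀ i : Fin t,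
        ν * n / 2 ≤ (((S i) ∩ H.biUnion S).card : ℝ) ∧
        ∃ j ∈ H, ν ^ 2 * n / 4 ≤ (((S i) ∩ (S j)).card : ℝ) := by
  classical
  rcases Nat.eq_zero_or_pos n with hn | hn
  · subst hn
    rcases Nat.eq_zero_or_pos t with ht | ht
    · subst ht
      refine ⟨∅, by simp; positivity, fun i => i.elim0⟩
    · refine ⟨{⟨0, ht⟩}, ?_, fun i => ⟨by simp, ⟨0, ht⟩, by simp, by simp⟩⟩
      have : (1 : ℝ) ≤ 2 / ν := by
        rw [le_div_iff₀ hν0]; linarith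
      simpa using this
  · have hn' : (0 : ℝ) < n := by exact_mod_cast hn
    have hc : (0 : ℝ) < ν * n / 2 := by positivity
    set c : ℝ := ν * n / 2 with hc_def
    set 𝒢 : Finset (Finset (Fin t)) :=
      Finset.univ.filter (fun H => c * H.card ≤ ((H.biUnion S).card : ℝ)) with h𝒢
    have hemp : (∅ : Finset (Fin t)) ∈ 𝒢 := by simp [h𝒢]
    obtain ⟨H, hH𝒢, hmax⟩ := Finset.exists_max_image 𝒢 Finset.card ⟨∅, hemp⟩
    have hP : c * H.card ≤ ((H.biUnion S).card : ℝ) := (Finset.mem_filter.mp hH𝒢).2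
    have hbUn : ((H.biUnion S).card : ℝ) ≤ n := by
      have : H.biUnion S ⊆ U := Finset.biUnion_subset.mpr fun j _ => hsub j
      have := (Finset.card_le_card this).trans hU
      exact_mod_cast this
    have hHcard : (H.card : ℝ) ≤ 2 / ν := by
      rw [le_div_iff₀ hν0]
      have : c * H.card ≤ n := hP.trans hbUn
      rw [hc_def] at this
      nlinarith [(Nat.cast_nonneg H.card : (0:ℝ) ≤ (H.card : ℝ))]
    have key : ∀ i, c ≤ ((S i ∩ H.biUnion S).card : ℝ) := by
      intro i
      by_contra hlt
      push_neg at hlt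
      have hiH : i ∉ H := by
        intro hi
        have hsubi : S i ⊆ H.biUnion S := fun x hx => Finset.mem_biUnion.mpr ⟨i, hi, hx⟩
        have : S i ∩ H.biUnion S = S i := Finset.inter_eq_left.mpr hsubi
        rw [this] at hlt
        have := hsize i
        rw [hc_def] at hlt
        nlinarith
      have hins : insert i H ∈ 𝒢 := by
        simp only [h𝒢, Finset.mem_filter, Finset.mem_univ, true_and]
        rw [Finset.biUnion_insert, Finset.card_insert_of_notMem hiH]
        have hie : (S i ∪ H.biUnion S).card + (S i ∩ H.biUnion S).card
            = (S i).card + (H.biUnion S).card := Finset.card_union_add_card_inter _ _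
        have hie' : ((S i ∪ H.biUnion S).card : ℝ) + ((S i ∩ H.biUnion S).card : ℝ)
            = ((S i).card : ℝ) + ((H.biUnion S).card : ℝ) := by exact_mod_cast hie
        have hsi := hsize i
        push_cast
        have hceq : ν * n = 2 * c := by rw [hc_def]; ring
        linarith
      have := hmax _ hins
      rw [Finset.card_insert_of_notMem hiH] at this
      omega
    refine ⟨H, hHcard, fun i => ⟨key i, ?_⟩⟩
    have hHne : H.Nonempty := by
      have h1 : ({i} : Finset (Fin t)) ∈ 𝒢 := by
        simp only [h𝒢, Finset.mem_filter, Finset.mem_univ, true_and,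
          Finset.singleton_biUnion, Finset.card_singleton]
        have := hsize i
        rw [hc_def]
        push_cast
        linarith
      have := hmax _ h1
      rw [Finset.card_singleton] at this
      exact Finset.card_pos.mp this
    have hHpos : (0 : ℝ) < H.card := by exact_mod_cast Finset.card_pos.mpr hHne
    have hsum : ((S i ∩ H.biUnion S).card : ℝ) ≤ ∑ j ∈ H, ((S i ∩ S j).card : ℝ) := by
      rw [Finset.inter_biUnion]
      exact_mod_cast Finset.card_biUnion_le
    have havg : ∑ j ∈ H, (c / H.card) ≤ ∑ j ∈ H, ((S i ∩ S j).card : ℝ) := by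
      rw [Finset.sum_const, nsmul_eq_mul, mul_div_cancel₀ _ (ne_of_gt hHpos)]
      exact (key i).trans hsum
    obtain ⟨j, hjH, hj⟩ := Finset.exists_le_of_sum_le hHne havg
    refine ⟨j, hjH, le_trans ?_ hj⟩
    rw [hc_def, div_le_div_iff₀ (by norm_num) hHpos]
    have hνH : (H.card : ℝ) * ν ≤ 2 := (le_div_iff₀ hν0).mp hHcard
    nlinarith [mul_le_mul_of_nonneg_left hνH (by positivity : (0:ℝ) ≤ ν * n)]
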